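/- Let q(d) = (2/3)·∑_{k=0}^{d−2} binom(d−1+k, k)·(1/3)^{d−1+k} + binom(2d−2, d−1)·(1/3)^{2d−1} for integers d ≥ 1 (with the first sum empty when d = 1), and for r ≥ 1 and t ≥ 0 define ρ(r, t) = ∑_{i=1}^{r} ∑_{(d_1,…,d_i) ∈ (ℤ≥1)^i, d_1+⋯+d_i = r} (∏_{j=1}^{i} q(d_j))·(1 − e^{-t}·∑_{l=0}^{i} t^l / l!). Then for all real t ≥ 0, ρ(3, t) = 11/27 − (11/27 + (11/27)·t + (19/81)·t²/2! + (1/27)·t³/3!)·e^{-t}. -/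

import Mathlib

/-- `q d` is the probability that the vertical distance between two consecutive
particles deposited at the center site equals `d` (for `d ≥ 1`). -/
noncomputable def parkingGap (d : ℕ) : ℝ :=
  (2/3) * ∑ k ∈ Finset.range (d - 1), ((d - 1 + k).choose k : ℝ) * (1/3) ^ (d - 1 + k)
    + ((2 * d - 2).choose (d - 1) : ℝ) * (1/3) ^ (2 * d - 1)

/-- `ρ r t` is the time-dependent particle density of the center site at layer
`r` at time `t` (Theorem 1 of the paper): the sum over all compositions
`(d₁, …, dᵢ)` of `r` into `i ≥ 1` positive parts. -/
noncomputable def density (r : ℕ) (t : ℝ) : ℝ :=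
  ∑ i ∈ Finset.Icc 1 r,
    ∑ d ∈ (Finset.Nat.antidiagonalTuple i r).filter (fun d => ∀ j, 1 ≤ d j),
      (∏ j, parkingGap (d j)) *
        (1 - Real.exp (-t) * ∑ l ∈ Finset.range (i + 1), t ^ l / (Nat.factorial l))

lemma parkingGap_one : parkingGap 1 = 1/3 := by
  norm_num [parkingGap]

lemma parkingGap_two : parkingGap 2 = 8/27 := by
  norm_num [parkingGap, Finset.sum_range_succ]

lemma parkingGap_three : parkingGap 3 = 14/81 := by
  norm_num [parkingGap, Finset.sum_range_succ, Nat.choose]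

lemma comp1 : (Finset.Nat.antidiagonalTuple 1 3).filter (fun d => ∀ j, 1 ≤ d j)
    = {![3]} := by decide

lemma comp2 : (Finset.Nat.antidiagonalTuple 2 3).filter (fun d => ∀ j, 1 ≤ d j)
    = {![1,2], ![2,1]} := by decide

lemma comp3 : (Finset.Nat.antidiagonalTuple 3 3).filter (fun d => ∀ j, 1 ≤ d j)
    = {![1,1,1]} := by decide

/-- The time-dependent density of the third layer. -/
theorem density_layer_three (t : ℝ) (ht : 0 ≤ t) :
    density 3 t = 11/27 - (11/27 + (11/27) * t + (19/81) * t^2 / (Nat.factorial 2)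
      + (1/27) * t^3 / (Nat.factorial 3)) * Real.exp (-t) := by
  have h : Finset.Icc 1 3 = ({1, 2, 3} : Finset ℕ) := by decide
  rw [density, h]
  rw [Finset.sum_insert (by decide), Finset.sum_insert (by decide),
    Finset.sum_singleton]
  rw [comp1, comp2, comp3]
  rw [Finset.sum_singleton, Finset.sum_insert (by decide), Finset.sum_singleton,
    Finset.sum_singleton]
  simp only [Fin.prod_univ_succ, Fin.prod_univ_zero, Matrix.cons_val_zero,
    Matrix.cons_val_one, Matrix.head_cons, Matrix.cons_val_succ,
    parkingGap_one, parkingGap_two, parkingGap_three]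
  simp only [Finset.sum_range_succ, Finset.sum_range_zero, Nat.factorial]
  push_cast
  ring
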